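/- Let q be a prime power and fix parameters k, m, s with q/3 ≥ k ≥ m ≥ s > 0 and 2k ≤ q - m, a set B ⊆ F_q of size s, and M = F_q \ B. Let C2⊥ be the evaluations on M of polynomials of degree < m vanishing on B. Then the dual code C2 = (C2⊥)⊥ (with respect to the standard inner product on F_q^M) equals the evaluations on M of all polynomials of degree < q - m. -/

import Mathlib

open Polynomial

set_option linter.unusedSectionVars false

open Polynomial Module

namespace Stmt7Aux

variable {F : Type*} [Field F] [Fintype F] [DecidableEq F]

/-- The standard dot-product bilinear form on `ι → F`. -/
noncomputable def dot (ι F : Type*) [Fintype ι] [Field F] :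
    LinearMap.BilinForm F (ι → F) :=
  LinearMap.mk₂ F (fun x y => ∑ i, x i * y i)
    (fun x x' y => by simp [add_mul, Finset.sum_add_distrib])
    (fun a x y => by simp [Finset.mul_sum, mul_assoc])
    (fun x y y' => by simp [mul_add, Finset.sum_add_distrib])
    (fun a x y => by simp [Finset.mul_sum, mul_left_comm])

@[simp] lemma dot_apply {ι : Type*} [Fintype ι] (x y : ι → F) :
    dot ι F x y = ∑ i, x i * y i := rfl

lemma dot_isRefl (ι : Type*) [Fintype ι] : (dot ι F).IsRefl := by
  intro x y h
  simpa [mul_comm] using h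

lemma dot_nondeg (ι : Type*) [Fintype ι] [DecidableEq ι] : (dot ι F).Nondegenerate := by
  refine ⟨?_, ?_⟩ <;>
  intro x hx <;>
  funext j <;>
  have := hx (Pi.single j 1) <;>
  simpa [Pi.single_apply, Finset.sum_ite_eq'] using this

lemma sum_eval_eq_zero (f : F[X]) (hf : f.degree < ((Fintype.card F - 1 : ℕ) : WithBot ℕ)) :
    ∑ x : F, f.eval x = 0 := by
  rcases eq_or_ne f 0 with rfl | hf0
  · simp
  have hd : f.natDegree < Fintype.card F - 1 := (natDegree_lt_iff_degree_lt hf0).2 hf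
  calc ∑ x : F, f.eval x
      = ∑ x : F, ∑ i ∈ Finset.range (f.natDegree + 1), f.coeff i * x ^ i := by
        refine Finset.sum_congr rfl fun x _ => ?_
        rw [eval_eq_sum_range]
    _ = ∑ i ∈ Finset.range (f.natDegree + 1), f.coeff i * ∑ x : F, x ^ i := by
        rw [Finset.sum_comm]
        simp [Finset.mul_sum]
    _ = 0 := Finset.sum_eq_zero fun i hi => by
        rw [FiniteField.sum_pow_lt_card_sub_one (K := F) i (by
          simp only [Finset.mem_range] at hi; omega), mul_zero]

lemma degree_mul_lt {a b : ℕ} {f g : F[X]} (ha : 0 < a) (hf : f ∈ degreeLT F a)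
    (hg : g ∈ degreeLT F b) : (f * g).degree < ((a + b - 1 : ℕ) : WithBot ℕ) := by
  rcases eq_or_ne f 0 with rfl | hf0
  · simp only [zero_mul, degree_zero]; exact WithBot.bot_lt_coe _
  rcases eq_or_ne g 0 with rfl | hg0
  · simp only [mul_zero, degree_zero]; exact WithBot.bot_lt_coe _
  rw [mem_degreeLT] at hf hg
  have h1 : f.natDegree < a := (natDegree_lt_iff_degree_lt hf0).2 hf
  have h2 : g.natDegree < b := (natDegree_lt_iff_degree_lt hg0).2 hg
  rw [← natDegree_lt_iff_degree_lt (mul_ne_zero hf0 hg0), natDegree_mul hf0 hg0]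
  omega

end Stmt7Aux

open Stmt7Aux

/-- Computation of the dual code `C2 = (C2⊥)⊥` for the punctured quantum Reed–Solomon
construction: with parameters `q/3 ≥ k ≥ m ≥ s > 0`, `2k ≤ q - m`, `B ⊆ F_q` of size
`s`, and `M = F_q \ B`, the dual (w.r.t. the standard inner product on `F_q^M`) of the
code of evaluations on `M` of polynomials of degree `< m` vanishing on `B` equals the
code of evaluations on `M` of all polynomials of degree `< q - m`. -/
theorem stmt7 {F : Type*} [Field F] [Fintype F] [DecidableEq F]
    (k m s : ℕ) (hk3 : 3 * k ≤ Fintype.card F) (hmk : m ≤ k) (hsm : s ≤ m) (hs : 0 < s)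
    (h2k : 2 * k ≤ Fintype.card F - m)
    (B : Finset F) (hB : B.card = s) :
    {c : {x : F // x ∉ B} → F |
        ∀ d : {x : F // x ∉ B} → F,
          (∃ p ∈ Polynomial.degreeLT F m,
              (∀ b ∈ B, p.eval b = 0) ∧ ∀ x, d x = p.eval x.1) →
          ∑ x, c x * d x = 0} =
      {c : {x : F // x ∉ B} → F |
        ∃ p ∈ Polynomial.degreeLT F (Fintype.card F - m), ∀ x, c x = p.eval x.1} := by
  classical
  set q := Fintype.card F with hq
  have hm1 : 1 ≤ m := le_trans hs hsm
  have hk1 : 1 ≤ k := le_trans hm1 hmk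
  have hq3 : 3 ≤ q := le_trans (by omega) hk3
  have hmq2 : m + 2 ≤ q := by omega
  set ι := {x : F // x ∉ B} with hι
  have hcard : Fintype.card ι = q - s := by
    have h1 : Fintype.card {x : F // x ∈ B} = s := by
      rw [← hB]
      exact Fintype.card_coe B
    have h2 := Fintype.card_subtype_compl (p := fun x : F => x ∈ B)
    rw [h1] at h2
    exact h2
  set evalM : F[X] →ₗ[F] (ι → F) := LinearMap.pi fun x => Polynomial.leval x.1 with hevalM
  have evalM_apply : ∀ (p : F[X]) (x : ι), evalM p x = p.eval x.1 := fun p x => rfl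
  set RB : F[X] := ∏ b ∈ B, (X - C b) with hRB
  have hRBmonic : RB.Monic := monic_prod_of_monic _ _ fun b _ => monic_X_sub_C b
  have hRBne : RB ≠ 0 := hRBmonic.ne_zero
  have hRBdeg : RB.natDegree = s := by
    rw [hRB, natDegree_prod _ _ fun b _ => X_sub_C_ne_zero b]
    simp [hB]
  have hRBvanish : ∀ b ∈ B, RB.eval b = 0 := fun b hb => by
    rw [hRB, eval_prod]
    exact Finset.prod_eq_zero hb (by simp)
  have hRBnezero : ∀ x : ι, RB.eval x.1 ≠ 0 := by
    intro x
    rw [hRB, eval_prod]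
    refine Finset.prod_ne_zero_iff.2 fun b hb => ?_
    simp only [eval_sub, eval_X, eval_C, sub_ne_zero]
    exact fun h => x.2 (h ▸ hb)
  -- key structure lemma
  have key : ∀ p : F[X], (p ∈ degreeLT F m ∧ ∀ b ∈ B, p.eval b = 0) ↔
      ∃ Q ∈ degreeLT F (m - s), p = RB * Q := by
    intro p
    constructor
    · rintro ⟨hpm, hpv⟩
      rcases eq_or_ne p 0 with rfl | hp0
      · exact ⟨0, Submodule.zero_mem _, by simp⟩
      have hdvd : RB ∣ p := by
        have hle : B.val ≤ p.roots := by
          rw [Multiset.le_iff_subset B.nodup]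
          intro b hb
          exact (mem_roots hp0).2 (hpv b hb)
        have := (Multiset.prod_X_sub_C_dvd_iff_le_roots hp0 B.val).2 hle
        rwa [hRB, Finset.prod_eq_multiset_prod]
      obtain ⟨Q, rfl⟩ := hdvd
      have hQ0 : Q ≠ 0 := right_ne_zero_of_mul hp0
      have hdegp : (RB * Q).natDegree < m :=
        (natDegree_lt_iff_degree_lt hp0).2 (mem_degreeLT.1 hpm)
      rw [natDegree_mul hRBne hQ0, hRBdeg] at hdegp
      exact ⟨Q, mem_degreeLT.2 ((natDegree_lt_iff_degree_lt hQ0).1 (by omega)), rfl⟩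
    · rintro ⟨Q, hQ, rfl⟩
      refine ⟨mem_degreeLT.2 ?_, fun b hb => by simp [hRBvanish b hb]⟩
      rcases eq_or_ne Q 0 with rfl | hQ0
      · simp only [mul_zero, degree_zero]
        exact WithBot.bot_lt_coe m
      have hQdeg : Q.natDegree < m - s :=
        (natDegree_lt_iff_degree_lt hQ0).2 (mem_degreeLT.1 hQ)
      rw [← natDegree_lt_iff_degree_lt (mul_ne_zero hRBne hQ0), natDegree_mul hRBne hQ0, hRBdeg]
      omega
  -- vanishing on M forces zero
  have hzero : ∀ (n : ℕ), n ≤ q - s → ∀ p ∈ degreeLT F n, (∀ x : ι, p.eval x.1 = 0) → p = 0 := by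
    intro n hn p hp hv
    rcases eq_or_ne p 0 with rfl | hp0
    · rfl
    refine eq_zero_of_natDegree_lt_card_of_eval_eq_zero p
      (f := (Subtype.val : ι → F)) Subtype.val_injective hv ?_
    rw [hcard]
    exact lt_of_lt_of_le ((natDegree_lt_iff_degree_lt hp0).2 (mem_degreeLT.1 hp)) hn
  set f1 : degreeLT F (q - m) →ₗ[F] (ι → F) := evalM ∘ₗ (degreeLT F (q - m)).subtype with hf1
  set f2 : degreeLT F (m - s) →ₗ[F] (ι → F) :=
    evalM ∘ₗ (LinearMap.mulLeft F RB) ∘ₗ (degreeLT F (m - s)).subtype with hf2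
  have f1_apply : ∀ (p : degreeLT F (q - m)) (x : ι), f1 p x = p.1.eval x.1 := fun p x => rfl
  have f2_apply : ∀ (Q : degreeLT F (m - s)) (x : ι), f2 Q x = (RB * Q.1).eval x.1 :=
    fun Q x => rfl
  have hinj1 : Function.Injective f1 := by
    rw [← LinearMap.ker_eq_bot, LinearMap.ker_eq_bot']
    rintro ⟨p, hp⟩ hker
    exact Subtype.ext (hzero _ (by omega) p hp fun x => congrFun hker x)
  have hinj2 : Function.Injective f2 := by
    rw [← LinearMap.ker_eq_bot, LinearMap.ker_eq_bot']
    rintro ⟨Q, hQ⟩ hker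
    refine Subtype.ext (hzero _ (by omega) Q hQ fun x => ?_)
    have h2 : (RB * Q).eval x.1 = 0 := congrFun hker x
    rw [eval_mul] at h2
    exact (mul_eq_zero.1 h2).resolve_left (hRBnezero x)
  have hfrLT : ∀ n : ℕ, finrank F (degreeLT F n) = n := fun n => by
    rw [(Polynomial.degreeLTEquiv F n).finrank_eq, Module.finrank_fin_fun]
  set W := LinearMap.range f2 with hW
  set Rsub := LinearMap.range f1 with hRsub
  have hfrW : finrank F W = m - s := by rw [hW, LinearMap.finrank_range_of_inj hinj2, hfrLT]
  have hfrR : finrank F Rsub = q - m := by rw [hRsub, LinearMap.finrank_range_of_inj hinj1, hfrLT]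
  have hfrV : finrank F (ι → F) = q - s := by rw [Module.finrank_pi, hcard]
  set L := (dot ι F).orthogonal W with hL
  have hfrL : finrank F L = q - m := by
    rw [hL, LinearMap.BilinForm.finrank_orthogonal (dot_nondeg ι) W, hfrV, hfrW]
    omega
  -- sum over M equals sum over F for polys vanishing on B
  have hsum : ∀ g : F[X], (∀ b ∈ B, g.eval b = 0) → ∑ x : ι, g.eval x.1 = ∑ x : F, g.eval x := by
    intro g hg
    have h1 : ∑ x ∈ Bᶜ, g.eval x = ∑ x : ι, g.eval x.1 :=
      Finset.sum_subtype Bᶜ (fun x => Finset.mem_compl) fun x => g.eval x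
    rw [← h1, ← Finset.sum_compl_add_sum B fun x => g.eval x, Finset.sum_eq_zero hg, add_zero]
  have hle : Rsub ≤ L := by
    rintro c ⟨p, rfl⟩
    rw [hL, LinearMap.BilinForm.mem_orthogonal_iff]
    rintro d ⟨Q, rfl⟩
    show dot ι F (f2 Q) (f1 p) = 0
    rw [dot_apply]
    have heq : ∀ x : ι, f2 Q x * f1 p x = ((RB * Q.1) * p.1).eval x.1 := fun x => by
      simp [f1_apply, f2_apply, eval_mul]
    rw [Finset.sum_congr rfl fun x _ => heq x,
      hsum _ (fun b hb => by simp [eval_mul, hRBvanish b hb])]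
    have hQm : (RB * Q.1) ∈ degreeLT F m := ((key _).2 ⟨Q.1, Q.2, rfl⟩).1
    have hd := degree_mul_lt hm1 hQm p.2
    have e : m + (q - m) - 1 = q - 1 := by omega
    rw [e] at hd
    exact sum_eval_eq_zero _ hd
  have hmain : Rsub = L := Submodule.eq_of_le_of_finrank_le hle (by rw [hfrL, hfrR])
  ext c
  simp only [Set.mem_setOf_eq]
  constructor
  · intro hc
    have hcL : c ∈ L := by
      rw [hL, LinearMap.BilinForm.mem_orthogonal_iff]
      rintro d ⟨Q, rfl⟩
      show dot ι F (f2 Q) c = 0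
      rw [dot_apply]
      refine (Finset.sum_congr rfl fun x _ => mul_comm _ _).trans
        (hc (f2 Q) ⟨RB * Q.1, ((key _).2 ⟨Q.1, Q.2, rfl⟩).1,
          ((key _).2 ⟨Q.1, Q.2, rfl⟩).2, fun x => rfl⟩)
    rw [← hmain] at hcL
    obtain ⟨p, hp⟩ := hcL
    exact ⟨p.1, p.2, fun x => (congrFun hp x).symm⟩
  · rintro ⟨p, hp, hcp⟩
    have hcR : c ∈ Rsub := ⟨⟨p, hp⟩, by funext x; exact (hcp x).symm⟩
    have hcL : c ∈ L := hmain ▸ hcR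
    rintro d ⟨p', hp', hv', hd⟩
    obtain ⟨Q, hQ, rfl⟩ := (key p').1 ⟨hp', hv'⟩
    have hdW : d ∈ W := ⟨⟨Q, hQ⟩, by funext x; exact (hd x).symm⟩
    have hdc := (LinearMap.BilinForm.mem_orthogonal_iff.1 hcL) d hdW
    refine (Finset.sum_congr rfl fun x _ => mul_comm _ _).trans hdc
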